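/- Let p be an odd prime and e ≥ 1. If s is a skew-morphism of ℤ/p^eℤ of order p^i (with 0 ≤ i ≤ e-1), then gcd(s(1) - 1, p^e) = p^(e-i), where s(1) - 1 is taken as an integer representative in {0, …, p^e - 1} (with the convention gcd(0, p^e) = p^e). -/

import Mathlib

/-- A bijection `f` of `ℤ/nℤ` is a skew-morphism if `f 0 = 0` and there is a
power function `π` with `f (x+y) = f x + f^(π x) y` for all `x, y`. -/
def IsSkewMorphism {n : ℕ} (f : Equiv.Perm (ZMod n)) : Prop :=
  f 0 = 0 ∧ ∃ π : ZMod n → ℤ, ∀ x y : ZMod n, f (x + y) = f x + (f ^ π x) y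

namespace SkewProof

open Equiv Function MulAction

/-- fixed points are fixed by natural powers -/
lemma npow_fix {α : Type*} {f : Perm α} {y : α} (h : f y = y) (k : ℕ) : (f ^ k) y = y := by
  induction k with
  | zero => rfl
  | succ k ih => rw [pow_succ, Perm.mul_apply, h, ih]

/-- fixed points are fixed by integer powers -/
lemma zpow_fix {α : Type*} {f : Perm α} {y : α} (h : f y = y) (z : ℤ) : (f ^ z) y = y := by
  have hinv : f⁻¹ y = y := by conv_lhs => rw [← h, Perm.inv_def, Equiv.symm_apply_apply]
  induction z using Int.induction_on with
  | zero => rfl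
  | succ k ih => rw [zpow_add_one, Perm.mul_apply, h, ih]
  | pred k ih => rw [zpow_sub_one, Perm.mul_apply, hinv, ih]

/-- reduce integer powers to natural powers -/
lemma zpow_reduce {G : Type*} [Group G] {g : G} {N : ℕ} (hN : 0 < N) (h : g ^ N = 1) (z : ℤ) :
    g ^ z = g ^ (z % (N : ℤ)).toNat := by
  have h0 : (0:ℤ) ≤ z % N := Int.emod_nonneg z (by exact_mod_cast hN.ne')
  have hzz : z = (N:ℤ) * (z / N) + z % N := (Int.mul_ediv_add_emod z N).symm
  rw [← zpow_natCast, Int.toNat_of_nonneg h0]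
  conv_lhs => rw [hzz]
  rw [zpow_add, zpow_mul, zpow_natCast, h, one_zpow, one_mul]

/-- L1 : powers of a skew morphism satisfy a skew-type identity with ambient powers -/
lemma pow_skew_exists {n : ℕ} {f : Perm (ZMod n)} {π : ZMod n → ℤ}
    (hπ : ∀ x y, f (x + y) = f x + (f ^ π x) y) (k : ℕ) (x : ZMod n) :
    ∃ q : ℤ, ∀ y, (f ^ k) (x + y) = (f ^ k) x + (f ^ q) y := by
  induction k with
  | zero => exact ⟨0, fun y => by simp⟩
  | succ k ih =>
      obtain ⟨q, hq⟩ := ih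
      refine ⟨π ((f ^ k) x) + q, fun y => ?_⟩
      rw [pow_succ', Perm.mul_apply, Perm.mul_apply, hq, hπ, zpow_add, Perm.mul_apply]

/-- L2 : a skew morphism fixing 1 is the identity -/
lemma skew_fix_one {n : ℕ} [NeZero n] {f : Perm (ZMod n)} (hf : IsSkewMorphism f)
    (h1 : f 1 = 1) : f = 1 := by
  obtain ⟨h0, π, hπ⟩ := hf
  have hk : ∀ k : ℕ, f ((k : ZMod n)) = (k : ZMod n) := by
    intro k
    induction k with
    | zero => simpa using h0
    | succ k ih =>
        push_cast
        rw [hπ, ih, zpow_fix h1]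
  ext x
  have := hk x.val
  rw [ZMod.natCast_rightInverse x] at this
  simpa using this


variable {p : ℕ} [Fact p.Prime]

lemma prime_pos : 0 < p := (Fact.out : p.Prime).pos

/-- Bezout: from a nonzero element we can reach p^(m-1) by an integer multiple -/
lemma reach_top (m : ℕ) (hm : 1 ≤ m) {y : ZMod (p ^ m)} (hy : y ≠ 0) :
    ∃ z : ℤ, z • y = ((p : ZMod (p ^ m)) ^ (m - 1)) := by
  haveI : NeZero (p ^ m) := ⟨pow_ne_zero _ (Fact.out : p.Prime).pos.ne'⟩
  set a := y.val with ha
  have hane : a ≠ 0 := fun h => hy ((ZMod.val_eq_zero y).mp h)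
  have halt : a < p ^ m := ZMod.val_lt y
  set d := Nat.gcd a (p ^ m) with hd
  have hdvd : d ∣ p ^ m := Nat.gcd_dvd_right _ _
  obtain ⟨j, hj, hdj⟩ := (Nat.dvd_prime_pow (Fact.out : p.Prime)).mp hdvd
  have hjlt : j ≤ m - 1 := by
    rcases Nat.lt_or_ge j m with h | h
    · omega
    · exfalso
      have : p ^ m ∣ a := by
        have : p ^ m ∣ d := by
          rw [hdj]; exact pow_dvd_pow p h
        exact this.trans (Nat.gcd_dvd_left _ _)
      have := Nat.le_of_dvd (Nat.pos_of_ne_zero hane) this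
      omega
  -- d = a * gcdA + p^m * gcdB over ℤ
  have hbez := Nat.gcd_eq_gcd_ab a (p ^ m)
  have hp0 : ((p : ZMod (p ^ m))) ^ m = 0 := by
    rw [← Nat.cast_pow, ZMod.natCast_self]
  have hcast : ((d : ℕ) : ZMod (p ^ m)) = (Nat.gcdA a (p ^ m)) • y := by
    have hya : ((a : ℕ) : ZMod (p ^ m)) = y := ZMod.natCast_rightInverse y
    have h2 : ((d : ℤ) : ZMod (p ^ m)) = ((a : ℤ) : ZMod (p ^ m)) * ((Nat.gcdA a (p ^ m) : ℤ) : ZMod (p ^ m)) := by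
      rw [show (d : ℤ) = a * Nat.gcdA a (p ^ m) + (p ^ m : ℕ) * Nat.gcdB a (p ^ m) from hbez]
      push_cast
      simp [hp0]
    rw [zsmul_eq_mul]
    push_cast at h2 ⊢
    rw [h2, hya, mul_comm]
  refine ⟨(p : ℤ) ^ (m - 1 - j) * Nat.gcdA a (p ^ m), ?_⟩
  have hsplit : (p : ZMod (p ^ m)) ^ (m - 1) = (p : ZMod (p^m)) ^ (m - 1 - j) * (d : ZMod (p^m)) := by
    rw [hdj]
    push_cast
    rw [← pow_add]
    congr 1
    omega
  rw [mul_smul]  -- (p^(m-1-j) * A) • y = p^(m-1-j) • (A • y)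
  rw [← hcast, hsplit]
  rw [zsmul_eq_mul]
  push_cast
  ring

/-- counting: a skew morphism of p-power order fixes all multiples of p^(m-1) pointwise -/
lemma fix_high (m : ℕ) (hm : 1 ≤ m) {f : Perm (ZMod (p ^ m))} (hf : IsSkewMorphism f)
    (hford : ∃ c, f ^ (p ^ c) = 1) :
    ∀ h : ZMod (p ^ m), (∃ c, h = (p : ZMod (p ^ m)) ^ (m - 1) * c) → f h = h := by
  classical
  haveI : NeZero (p ^ m) := ⟨pow_ne_zero _ (Fact.out : p.Prime).pos.ne'⟩
  obtain ⟨h0, π, hπ⟩ := hf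
  obtain ⟨c, hc⟩ := hford
  -- step 1: find a nonzero fixed point via p-group counting
  set H : Subgroup (Perm (ZMod (p ^ m))) := Subgroup.zpowers f with hH
  have hpg : IsPGroup p H := by
    intro g
    obtain ⟨z, hz⟩ := Subgroup.mem_zpowers_iff.mp g.2
    refine ⟨c, ?_⟩
    have : ((g : Perm (ZMod (p^m))) ^ (p ^ c)) = 1 := by
      rw [← hz, ← zpow_natCast, ← zpow_mul, mul_comm, zpow_mul, zpow_natCast, hc, one_zpow]
    ext1
    rw [Subgroup.coe_pow, this, Subgroup.coe_one]
  haveI : Fintype (fixedPoints H (ZMod (p ^ m))) := Fintype.ofFinite _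
  have hcount := hpg.card_modEq_card_fixedPoints (ZMod (p ^ m))
  rw [Nat.card_eq_fintype_card, Nat.card_eq_fintype_card, ZMod.card] at hcount
  have hzero : (0 : ZMod (p ^ m)) ∈ fixedPoints H (ZMod (p ^ m)) := by
    intro g
    obtain ⟨z, hz⟩ := Subgroup.mem_zpowers_iff.mp g.2
    show (g : Perm (ZMod (p^m))) • (0 : ZMod (p^m)) = 0
    rw [← hz, Equiv.Perm.smul_def, zpow_fix h0]
  have hexy : ∃ y : ZMod (p ^ m), y ≠ 0 ∧ f y = y := by
    by_contra hcon
    push_neg at hcon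
    have hsub : fixedPoints H (ZMod (p ^ m)) ⊆ {0} := by
      intro y hy
      by_contra hy0
      have hfy : f y = y := hy ⟨f, Subgroup.mem_zpowers f⟩
      exact hcon y (by simpa using hy0) hfy
    have hle : Fintype.card (fixedPoints H (ZMod (p ^ m))) ≤ 1 := by
      have h := Set.card_le_card hsub
      simpa using h
    have hge : 0 < Fintype.card (fixedPoints H (ZMod (p ^ m))) :=
      Fintype.card_pos_iff.mpr ⟨⟨0, hzero⟩⟩
    have hcard1 : Fintype.card (fixedPoints H (ZMod (p ^ m))) = 1 := by omega
    rw [hcard1] at hcount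
    have hdvd : p ∣ p ^ m := dvd_pow_self p (by omega)
    have h2le := (Fact.out : p.Prime).two_le
    have hmod0 : p ^ m % p = 0 := Nat.mod_eq_zero_of_dvd hdvd
    have hcc : p ^ m % p = 1 % p := hcount
    rw [hmod0, Nat.mod_eq_of_lt (by omega : 1 < p)] at hcc
    exact absurd hcc (by omega)
  obtain ⟨y, hy0, hyfix⟩ := hexy
  -- step 2: the set of fixed points is an additive subgroup
  set Fix : AddSubgroup (ZMod (p ^ m)) :=
    { carrier := {x | f x = x}
      zero_mem' := h0
      add_mem' := by
        intro a b ha hb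
        show f (a + b) = a + b
        rw [hπ, ha, zpow_fix hb]
      neg_mem' := by
        intro a ha
        have hfa : f a = a := ha
        show f (-a) = -a
        have h2 : f (-a + a) = f (-a) + (f ^ π (-a)) a := hπ (-a) a
        rw [neg_add_cancel, h0, zpow_fix hfa] at h2
        exact eq_neg_of_add_eq_zero_left h2.symm } with hFix
  have hyFix : y ∈ Fix := hyfix
  obtain ⟨z, hz⟩ := reach_top m hm hy0
  have htop : ((p : ZMod (p ^ m)) ^ (m - 1)) ∈ Fix := hz ▸ zsmul_mem hyFix z
  rintro h ⟨c', rfl⟩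
  have : (p : ZMod (p ^ m)) ^ (m - 1) * c' = c'.val • ((p : ZMod (p ^ m)) ^ (m - 1)) := by
    rw [nsmul_eq_mul, mul_comm]
    congr 1
    exact (ZMod.natCast_rightInverse c').symm
  rw [this]
  exact nsmul_mem htop c'.val


/-! ### Descending a permutation along `ZMod n → ZMod m` -/

section Descend

variable {n m : ℕ} [NeZero n] [NeZero m] (hdvd : m ∣ n)

/-- the cast ring hom -/
noncomputable abbrev cst : ZMod n →+* ZMod m := ZMod.castHom hdvd (ZMod m)

lemma cst_natCast (a : ℕ) : cst hdvd ((a : ZMod n)) = (a : ZMod m) := map_natCast _ a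

lemma cst_lift (x : ZMod m) : cst hdvd ((x.val : ZMod n)) = x := by
  rw [cst_natCast, ZMod.natCast_rightInverse x]

lemma cst_surj : Surjective (cst (n := n) hdvd) := fun x => ⟨(x.val : ZMod n), cst_lift hdvd x⟩

lemma cst_ker {h : ZMod n} (hh : cst hdvd h = 0) : ∃ c : ZMod n, h = (m : ZMod n) * c := by
  have hv : h = ((h.val : ℕ) : ZMod n) := (ZMod.natCast_rightInverse h).symm
  rw [hv, cst_natCast] at hh
  obtain ⟨k, hk⟩ := (ZMod.natCast_eq_zero_iff _ _).mp hh
  exact ⟨(k : ZMod n), by rw [hv, hk]; push_cast; ring⟩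

lemma cst_ker' (c : ZMod n) : cst hdvd ((m : ZMod n) * c) = 0 := by
  rw [map_mul, cst_natCast, ZMod.natCast_self, zero_mul]

variable (f : Perm (ZMod n))
variable (hfix : ∀ (x h : ZMod n), cst hdvd h = 0 → f (x + h) = f x + h)

/-- the descended permutation -/
noncomputable def desc : Perm (ZMod m) := by
  refine Equiv.ofBijective (fun x => cst hdvd (f ((x.val : ZMod n)))) ?_
  rw [← Finite.injective_iff_bijective]
  have hsurj : Surjective (fun x : ZMod m => cst hdvd (f ((x.val : ZMod n)))) := by
    intro z
    obtain ⟨w, hw⟩ := cst_surj hdvd z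
    refine ⟨cst hdvd (f.symm w), ?_⟩
    have hk : cst hdvd (f.symm w - (((cst hdvd (f.symm w)).val : ℕ) : ZMod n)) = 0 := by
      rw [map_sub, cst_lift, sub_self]
    have := hfix (((cst hdvd (f.symm w)).val : ℕ) : ZMod n)
      (f.symm w - (((cst hdvd (f.symm w)).val : ℕ) : ZMod n)) hk
    rw [add_sub_cancel] at this
    simp only
    rw [← sub_eq_iff_eq_add] at this
    rw [← sub_eq_zero]
    calc cst hdvd (f ↑(cst hdvd (f.symm w)).val) - z
        = cst hdvd (f (f.symm w)) - cst hdvd (f.symm w - ↑(cst hdvd (f.symm w)).val) - z := by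
          rw [← this]; push_cast [map_sub]; ring
      _ = 0 := by rw [hk, Equiv.apply_symm_apply, hw]; ring
  exact (Finite.injective_iff_surjective).mpr hsurj

lemma desc_comm : ∀ x : ZMod n, desc hdvd f hfix (cst hdvd x) = cst hdvd (f x) := by
  intro x
  have hdef : desc hdvd f hfix (cst hdvd x) = cst hdvd (f (((cst hdvd x).val : ℕ) : ZMod n)) := rfl
  have hk : cst hdvd (x - (((cst hdvd x).val : ℕ) : ZMod n)) = 0 := by
    rw [map_sub, cst_lift, sub_self]
  have h2 := hfix (((cst hdvd x).val : ℕ) : ZMod n) (x - (((cst hdvd x).val : ℕ) : ZMod n)) hk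
  rw [add_sub_cancel] at h2
  rw [hdef, h2, map_add, hk, add_zero]

lemma desc_pow : ∀ (k : ℕ) (x : ZMod n), (desc hdvd f hfix ^ k) (cst hdvd x) = cst hdvd ((f ^ k) x) := by
  intro k
  induction k with
  | zero => intro x; rfl
  | succ k ih =>
      intro x
      rw [pow_succ', pow_succ', Perm.mul_apply, Perm.mul_apply, ih, desc_comm]

lemma desc_zpow : ∀ (z : ℤ) (x : ZMod n), (desc hdvd f hfix ^ z) (cst hdvd x) = cst hdvd ((f ^ z) x) := by
  intro z x
  cases z with
  | ofNat k => rw [Int.ofNat_eq_coe, zpow_natCast, zpow_natCast, desc_pow]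
  | negSucc k =>
      rw [zpow_negSucc, zpow_negSucc]
      set y := ((f ^ (k+1))⁻¹) x with hy
      have hx : x = (f ^ (k+1)) y := by rw [hy, Perm.inv_def, Equiv.apply_symm_apply]
      rw [hx, ← desc_pow hdvd f hfix (k+1) y, Perm.inv_def, Equiv.symm_apply_apply]

lemma desc_skew (hsk : IsSkewMorphism f) : IsSkewMorphism (desc hdvd f hfix) := by
  obtain ⟨h0, π, hπ⟩ := hsk
  constructor
  · have : ((0 : ZMod m) : ZMod m) = cst hdvd (0 : ZMod n) := by rw [map_zero]
    rw [show (0 : ZMod m) = cst hdvd (0 : ZMod n) from (map_zero _).symm, desc_comm, h0, map_zero]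
  · refine ⟨fun z => π ((z.val : ZMod n)), fun a b => ?_⟩
    obtain ⟨y, rfl⟩ := cst_surj hdvd b
    have harg : a + cst hdvd y = cst hdvd ((a.val : ZMod n) + y) := by
      rw [map_add, cst_lift]
    have hfst : desc hdvd f hfix a = cst hdvd (f ((a.val : ZMod n))) := by
      conv_lhs => rw [← cst_lift hdvd a]
      rw [desc_comm]
    calc desc hdvd f hfix (a + cst hdvd y)
        = desc hdvd f hfix (cst hdvd ((a.val : ZMod n) + y)) := by rw [harg]
      _ = cst hdvd (f ((a.val : ZMod n) + y)) := desc_comm _ _ _ _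
      _ = cst hdvd (f ((a.val : ZMod n))) + cst hdvd ((f ^ π ((a.val : ZMod n))) y) := by
          rw [hπ, map_add]
      _ = desc hdvd f hfix a + (desc hdvd f hfix ^ π ((a.val : ZMod n))) (cst hdvd y) := by
          rw [desc_zpow, hfst]

lemma desc_eq_one (g : Perm (ZMod n)) (hg : ∀ x h, cst hdvd h = 0 → g (x + h) = g x + h)
    (hgk : ∀ x, cst hdvd (g x) = cst hdvd x) : desc hdvd g hg = 1 := by
  ext z
  obtain ⟨x, rfl⟩ := cst_surj hdvd z
  rw [desc_comm, hgk]
  rfl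

end Descend


/-! ### helper lemmas -/

lemma zsmul_prime_dvd {A : Type*} [AddCommGroup A] {x : A} (hx0 : x ≠ 0)
    (hpx : p • x = 0) {z : ℤ} (hz : z • x = 0) : (p : ℤ) ∣ z := by
  have h1 : addOrderOf x ∣ p := addOrderOf_dvd_of_nsmul_eq_zero hpx
  have h2 : addOrderOf x ≠ 1 := fun h => hx0 (AddMonoid.addOrderOf_eq_one_iff.mp h)
  have h3 : addOrderOf x = p := ((Fact.out : p.Prime).eq_one_or_self_of_dvd _ h1).resolve_left h2
  rw [← h3]
  exact (addOrderOf_dvd_iff_zsmul_eq_zero).mpr hz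

lemma psmul_high (E : ℕ) {a : ZMod (p ^ (E + 2))} (ha : p • a = 0) :
    ∃ u, a = (p : ZMod (p ^ (E + 2))) ^ (E + 1) * u := by
  haveI : NeZero (p ^ (E + 2)) := ⟨pow_ne_zero _ (Fact.out : p.Prime).pos.ne'⟩
  have hval : ((p * a.val : ℕ) : ZMod (p ^ (E + 2))) = 0 := by
    push_cast
    rw [ZMod.natCast_rightInverse a, ← nsmul_eq_mul]
    exact ha
  have hdvd : p ^ (E + 2) ∣ p * a.val := (ZMod.natCast_eq_zero_iff _ _).mp hval
  have hdvd2 : p ^ (E + 1) ∣ a.val := by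
    obtain ⟨t, ht⟩ := hdvd
    have hp : 0 < p := (Fact.out : p.Prime).pos
    refine ⟨t, Nat.eq_of_mul_eq_mul_left hp ?_⟩
    rw [ht]; ring
  obtain ⟨t, ht⟩ := hdvd2
  refine ⟨(t : ZMod (p ^ (E + 2))), ?_⟩
  conv_lhs => rw [← ZMod.natCast_rightInverse a]
  rw [ht]
  push_cast
  ring


/-! ### the key lemma -/

lemma keyC (hodd : Odd p) : ∀ E : ℕ, ∀ f : Perm (ZMod (p ^ (E + 1))), IsSkewMorphism f →
    (∃ c, f ^ (p ^ c) = 1) → ∀ k : ℕ, f ^ (k * p) = 1 →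
    ∀ x, ∃ u, (f ^ k) x = x + (p : ZMod (p ^ (E + 1))) ^ E * u := by
  intro E
  induction E with
  | zero =>
      intro f _ _ k _ x
      exact ⟨(f ^ k) x - x, by simp⟩
  | succ E IH =>
    intro f hsk hford k hkp x
    haveI : NeZero (p ^ (E + 1 + 1)) := ⟨pow_ne_zero _ (Fact.out : p.Prime).pos.ne'⟩
    haveI : NeZero (p ^ (E + 1)) := ⟨pow_ne_zero _ (Fact.out : p.Prime).pos.ne'⟩
    by_cases hf1 : f = 1
    · refine ⟨0, ?_⟩
      rw [hf1, one_pow]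
      simp
    obtain ⟨h0, π, hπ⟩ := hsk
    set N := orderOf f with hNdef
    have hN1 : f ^ N = 1 := pow_orderOf_eq_one f
    have hNpos : 0 < N := orderOf_pos f
    have hpN : p ∣ N := by
      obtain ⟨c, hc⟩ := hford
      have hdN : N ∣ p ^ c := orderOf_dvd_of_pow_eq_one hc
      obtain ⟨j, hj, hNj⟩ := (Nat.dvd_prime_pow (Fact.out : p.Prime)).mp hdN
      have hj1 : 1 ≤ j := by
        rcases Nat.eq_zero_or_pos j with h | h
        · exfalso
          apply hf1
          have : N = 1 := by rw [hNj, h, pow_zero]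
          exact orderOf_eq_one_iff.mp this
        · exact h
      rw [hNj]
      exact dvd_pow_self p (by omega)
    -- pointwise fixing of the top layer
    have fixV : ∀ h : ZMod (p ^ (E + 1 + 1)),
        (∃ c, h = (p : ZMod (p ^ (E + 1 + 1))) ^ (E + 1) * c) → f h = h := by
      have hfh := fix_high (p := p) (E + 2) (by omega) ⟨h0, π, hπ⟩ hford
      intro h hh
      exact hfh h (by simpa using hh)
    have shiftV : ∀ (y h : ZMod (p ^ (E + 1 + 1))),
        (∃ c, h = (p : ZMod (p ^ (E + 1 + 1))) ^ (E + 1) * c) → f (y + h) = f y + h := by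
      intro y h hh
      rw [hπ, zpow_fix (fixV h hh)]
    have hdvd : (p ^ (E + 1)) ∣ (p ^ (E + 1 + 1)) := pow_dvd_pow p (by omega)
    have hkerV : ∀ h : ZMod (p ^ (E + 1 + 1)), cst hdvd h = 0 →
        (∃ c, h = (p : ZMod (p ^ (E + 1 + 1))) ^ (E + 1) * c) := by
      intro h hh
      obtain ⟨c, hc⟩ := cst_ker hdvd hh
      exact ⟨c, by rw [hc]; push_cast; ring⟩
    have hVker : ∀ h : ZMod (p ^ (E + 1 + 1)),
        (∃ c, h = (p : ZMod (p ^ (E + 1 + 1))) ^ (E + 1) * c) → cst hdvd h = 0 := by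
      rintro h ⟨c, rfl⟩
      have : ((p : ZMod (p ^ (E+1+1))) ^ (E + 1) : ZMod (p ^ (E+1+1))) = ((p ^ (E+1) : ℕ) : ZMod (p ^ (E+1+1))) := by push_cast; ring
      rw [this]
      exact cst_ker' hdvd c
    have hfixcst : ∀ (y h : ZMod (p ^ (E + 1 + 1))), cst hdvd h = 0 → f (y + h) = f y + h :=
      fun y h hh => shiftV y h (hkerV h hh)
    -- the descended morphism
    set fb := desc hdvd f hfixcst with hfb
    have hfbsk : IsSkewMorphism fb := desc_skew hdvd f hfixcst ⟨h0, π, hπ⟩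
    have hfbpow : ∀ (j : ℕ), f ^ j = 1 → fb ^ j = 1 := by
      intro j hj
      ext z
      obtain ⟨w, rfl⟩ := cst_surj hdvd z
      rw [desc_pow hdvd f hfixcst j w, hj]
      rfl
    have hfbford : ∃ c, fb ^ (p ^ c) = 1 := by
      obtain ⟨c, hc⟩ := hford
      exact ⟨c, hfbpow _ hc⟩
    -- DW' : the IH conclusion lifted back up
    have DW : ∀ k' : ℕ, f ^ (k' * p) = 1 → ∀ y : ZMod (p ^ (E + 1 + 1)),
        ∃ w, (f ^ k') y = y + (p : ZMod (p ^ (E + 1 + 1))) ^ E * w := by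
      intro k' hk' y
      obtain ⟨u, hu⟩ := IH fb hfbsk hfbford k' (hfbpow _ hk') (cst hdvd y)
      rw [hfb, desc_pow hdvd f hfixcst k' y] at hu
      set w0 : ZMod (p ^ (E + 1 + 1)) := ((u.val : ℕ) : ZMod (p ^ (E + 1 + 1))) with hw0
      have hcw0 : cst hdvd w0 = u := cst_lift hdvd u
      have hker0 : cst hdvd ((f ^ k') y - y - (p : ZMod (p ^ (E + 1 + 1))) ^ E * w0) = 0 := by
        rw [map_sub, map_sub, hu, map_mul, map_pow, map_natCast, hcw0]
        ring
      obtain ⟨c0, hc0⟩ := hkerV _ hker0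
      refine ⟨w0 + p * c0, ?_⟩
      have hgl : (f ^ k') y - y - (p : ZMod (p ^ (E + 1 + 1))) ^ E * w0
          = (p : ZMod (p ^ (E + 1 + 1))) ^ (E + 1) * c0 := hc0
      linear_combination hgl
    -- starV : on the W layer, f moves by V only
    have starV : ∀ z : ZMod (p ^ (E + 1 + 1)),
        (∃ c, z = (p : ZMod (p ^ (E + 1 + 1))) ^ E * c) →
        (∃ v, f z - z = (p : ZMod (p ^ (E + 1 + 1))) ^ (E + 1) * v) := by
      rintro z ⟨c1, rfl⟩
      have hfh := fix_high (p := p) (E + 1) (by omega) hfbsk hfbford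
      have hfix1 : fb (cst hdvd ((p : ZMod (p ^ (E + 1 + 1))) ^ E * c1))
          = cst hdvd ((p : ZMod (p ^ (E + 1 + 1))) ^ E * c1) := by
        apply hfh
        refine ⟨cst hdvd c1, ?_⟩
        rw [map_mul, map_pow, map_natCast]
        simp
      have hker : cst hdvd (f ((p : ZMod (p ^ (E + 1 + 1))) ^ E * c1)
          - (p : ZMod (p ^ (E + 1 + 1))) ^ E * c1) = 0 := by
        rw [map_sub, ← desc_comm hdvd f hfixcst, ← hfb, hfix1, sub_self]
      exact hkerV _ hker
    -- basic closure properties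
    have Wp0 : (∃ c, (0 : ZMod (p ^ (E + 1 + 1))) = (p : ZMod (p ^ (E + 1 + 1))) ^ E * c) :=
      ⟨0, by rw [mul_zero]⟩
    have VW : ∀ v : ZMod (p ^ (E + 1 + 1)),
        (∃ c, v = (p : ZMod (p ^ (E + 1 + 1))) ^ (E + 1) * c) →
        (∃ c, v = (p : ZMod (p ^ (E + 1 + 1))) ^ E * c) := by
      rintro _ ⟨c, rfl⟩; exact ⟨p * c, by ring⟩
    have Wadd : ∀ a b : ZMod (p ^ (E + 1 + 1)),
        (∃ c, a = (p : ZMod (p ^ (E + 1 + 1))) ^ E * c) →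
        (∃ c, b = (p : ZMod (p ^ (E + 1 + 1))) ^ E * c) →
        (∃ c, a + b = (p : ZMod (p ^ (E + 1 + 1))) ^ E * c) := by
      rintro _ _ ⟨a, rfl⟩ ⟨b, rfl⟩; exact ⟨a + b, by ring⟩
    have Vadd : ∀ a b : ZMod (p ^ (E + 1 + 1)),
        (∃ c, a = (p : ZMod (p ^ (E + 1 + 1))) ^ (E + 1) * c) →
        (∃ c, b = (p : ZMod (p ^ (E + 1 + 1))) ^ (E + 1) * c) →
        (∃ c, a + b = (p : ZMod (p ^ (E + 1 + 1))) ^ (E + 1) * c) := by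
      rintro _ _ ⟨a, rfl⟩ ⟨b, rfl⟩; exact ⟨a + b, by ring⟩
    have Wnsmul : ∀ (t : ℕ) (a : ZMod (p ^ (E + 1 + 1))),
        (∃ c, a = (p : ZMod (p ^ (E + 1 + 1))) ^ E * c) →
        (∃ c, t • a = (p : ZMod (p ^ (E + 1 + 1))) ^ E * c) := by
      rintro t _ ⟨a, rfl⟩
      exact ⟨t * a, by rw [nsmul_eq_mul]; ring⟩
    have Vnsmul : ∀ (t : ℕ) (a : ZMod (p ^ (E + 1 + 1))),
        (∃ c, a = (p : ZMod (p ^ (E + 1 + 1))) ^ (E + 1) * c) →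
        (∃ c, t • a = (p : ZMod (p ^ (E + 1 + 1))) ^ (E + 1) * c) := by
      rintro t _ ⟨a, rfl⟩
      exact ⟨t * a, by rw [nsmul_eq_mul]; ring⟩
    have hppow0 : (p : ZMod (p ^ (E + 1 + 1))) ^ (E + 1 + 1) = 0 := by
      rw [← Nat.cast_pow, ZMod.natCast_self]
    have Vkill : ∀ v : ZMod (p ^ (E + 1 + 1)),
        (∃ c, v = (p : ZMod (p ^ (E + 1 + 1))) ^ (E + 1) * c) → p • v = 0 := by
      rintro _ ⟨c, rfl⟩
      rw [nsmul_eq_mul]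
      calc (p : ZMod (p ^ (E + 1 + 1))) * ((p : ZMod (p ^ (E + 1 + 1))) ^ (E + 1) * c)
          = (p : ZMod (p ^ (E + 1 + 1))) ^ (E + 1 + 1) * c := by ring
        _ = 0 := by rw [hppow0, zero_mul]
    have Wkill2 : ∀ z : ZMod (p ^ (E + 1 + 1)),
        (∃ c, z = (p : ZMod (p ^ (E + 1 + 1))) ^ E * c) → (p ^ 2 : ℕ) • z = 0 := by
      rintro _ ⟨c, rfl⟩
      rw [nsmul_eq_mul]
      push_cast
      calc (p : ZMod (p ^ (E + 1 + 1))) ^ 2 * ((p : ZMod (p ^ (E + 1 + 1))) ^ E * c)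
          = (p : ZMod (p ^ (E + 1 + 1))) ^ (E + 1 + 1) * c := by ring
        _ = 0 := by rw [hppow0, zero_mul]
    have hDV : ∀ z : ZMod (p ^ (E + 1 + 1)),
        (∃ c, z = (p : ZMod (p ^ (E + 1 + 1))) ^ E * c) →
        (∃ c, f z - z = (p : ZMod (p ^ (E + 1 + 1))) ^ (E + 1) * c) := starV
    -- A5 : iterates on the W layer
    have A5 : ∀ z : ZMod (p ^ (E + 1 + 1)),
        (∃ c, z = (p : ZMod (p ^ (E + 1 + 1))) ^ E * c) →
        ∀ (t : ℕ), (f ^ t) z = z + t • (f z - z) := by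
      intro z hz t
      induction t with
      | zero => simp
      | succ t ih =>
          have h1 : (f ^ (t + 1)) z = f ((f ^ t) z) := by rw [pow_succ' f t, Perm.mul_apply]
          have h2 := shiftV z (t • (f z - z)) (Vnsmul t _ (hDV z hz))
          rw [h1, ih, h2, succ_nsmul]
          abel
    -- normalized power function
    have hrr : ∀ z : ZMod (p ^ (E + 1 + 1)), f ^ (π z) = f ^ (((π z) % (N : ℤ)).toNat) :=
      fun z => zpow_reduce hNpos hN1 (π z)
    have skewn : ∀ z y : ZMod (p ^ (E + 1 + 1)),
        f (z + y) = f z + (f ^ (((π z) % (N : ℤ)).toNat)) y := by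
      intro z y
      rw [hπ, hrr]
    -- A10 : the structure of D on the W layer
    have A10 : ∀ z z' : ZMod (p ^ (E + 1 + 1)),
        (∃ c, z = (p : ZMod (p ^ (E + 1 + 1))) ^ E * c) →
        (∃ c, z' = (p : ZMod (p ^ (E + 1 + 1))) ^ E * c) →
        f (z + z') - (z + z') = (f z - z) + (((π z) % (N : ℤ)).toNat) • (f z' - z') := by
      intro z z' hz hz'
      rw [skewn, A5 z' hz' (((π z) % (N : ℤ)).toNat)]
      abel
    -- pi(0) is 1 mod p
    have hπ0 : (p : ℤ) ∣ (((π 0 % (N : ℤ)).toNat : ℤ) - 1) := by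
      have hf0 : f ^ (π 0) = f := by
        ext y
        have h5 := hπ 0 y
        rw [zero_add, h0, zero_add] at h5
        exact h5.symm
      have hdN : (N : ℤ) ∣ π 0 - 1 := by
        have h6 : f ^ (π 0 - 1) = 1 := by
          rw [zpow_sub, hf0, zpow_one]
          simp
        rw [hNdef]
        exact orderOf_dvd_iff_zpow_eq_one.mpr h6
      have h1 : (p : ℤ) ∣ (N : ℤ) := Int.natCast_dvd_natCast.mpr hpN
      have h2 : (N : ℤ) ∣ (((π 0 % (N : ℤ)).toNat : ℤ) - π 0) := by
        have hr0' : ((π 0 % (N : ℤ)).toNat : ℤ) = π 0 % N :=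
          Int.toNat_of_nonneg (Int.emod_nonneg _ (by exact_mod_cast hNpos.ne'))
        refine ⟨-(π 0 / N), ?_⟩
        rw [hr0']
        have h3 := Int.mul_ediv_add_emod (π 0) N
        linarith
      have h4 : (((π 0 % (N : ℤ)).toNat : ℤ) - 1)
          = ((((π 0 % (N : ℤ)).toNat : ℤ) - π 0) + (π 0 - 1)) := by ring
      rw [h4]
      exact dvd_add (h1.trans h2) (h1.trans hdN)
    -- the k-step skew identity at the base point x
    obtain ⟨Q, hQ⟩ := pow_skew_exists hπ k x
    have hQr : f ^ Q = f ^ ((Q % (N : ℤ)).toNat) := zpow_reduce hNpos hN1 Q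
    obtain ⟨w1, hw1⟩ := DW k hkp x
    have hdW : ∃ c, ((f ^ k) x - x : ZMod (p ^ (E + 1 + 1))) = (p : ZMod (p ^ (E + 1 + 1))) ^ E * c :=
      ⟨w1, by rw [hw1]; ring⟩
    -- partial sums are in V
    have VpSum : ∀ j : ℕ, ∃ c,
        (∑ jj ∈ Finset.range j, (f (jj • ((f ^ k) x - x)) - jj • ((f ^ k) x - x)))
          = (p : ZMod (p ^ (E + 1 + 1))) ^ (E + 1) * c := by
      intro j
      induction j with
      | zero => exact ⟨0, by simp⟩
      | succ j ih =>
          rw [Finset.sum_range_succ]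
          exact Vadd _ _ ih (hDV _ (Wnsmul j _ hdW))
    -- the orbit points formula
    have zfork : ∀ j : ℕ, (f ^ (k * j)) x - x =
        j • ((f ^ k) x - x) + ((Q % (N : ℤ)).toNat) •
          (∑ jj ∈ Finset.range j, (f (jj • ((f ^ k) x - x)) - jj • ((f ^ k) x - x))) := by
      intro j
      induction j with
      | zero => simp
      | succ j ih =>
          have hWzj : ∃ c, ((f ^ (k * j)) x - x) = (p : ZMod (p ^ (E + 1 + 1))) ^ E * c := by
            rw [ih]
            exact Wadd _ _ (Wnsmul j _ hdW) (VW _ (Vnsmul _ _ (VpSum j)))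
          have hsplit : (f ^ (k * (j + 1))) x = (f ^ k) ((f ^ (k * j)) x) := by
            rw [← Perm.mul_apply, ← pow_add]
            congr 2
            ring
          have hx2 : (f ^ (k * j)) x = x + ((f ^ (k * j)) x - x) := by abel
          have hDzj : f ((f ^ (k * j)) x - x) - ((f ^ (k * j)) x - x)
              = f (j • ((f ^ k) x - x)) - j • ((f ^ k) x - x) := by
            rw [ih, shiftV _ _ (Vnsmul _ _ (VpSum j))]
            abel
          rw [hsplit]
          conv_lhs => rw [hx2]
          rw [hQ, hQr, A5 _ hWzj, hDzj, ih, Finset.sum_range_succ, smul_add, succ_nsmul]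
          abel
    -- the global relation
    have hmain : (0 : ZMod (p ^ (E + 1 + 1))) = p • ((f ^ k) x - x) + ((Q % (N : ℤ)).toNat) •
        (∑ jj ∈ Finset.range p, (f (jj • ((f ^ k) x - x)) - jj • ((f ^ k) x - x))) := by
      have h7 := zfork p
      rw [hkp] at h7
      simpa using h7
    by_cases hI : ∀ z z' : ZMod (p ^ (E + 1 + 1)),
        (∃ c, z = (p : ZMod (p ^ (E + 1 + 1))) ^ E * c) →
        (∃ c, z' = (p : ZMod (p ^ (E + 1 + 1))) ^ E * c) →
        (((π z) % (N : ℤ)).toNat) • (f z' - z') = (f z' - z')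
    · -- Case I
      have Dlin : ∀ j : ℕ, f (j • ((f ^ k) x - x)) - j • ((f ^ k) x - x)
          = j • (f ((f ^ k) x - x) - ((f ^ k) x - x)) := by
        intro j
        induction j with
        | zero => simp [h0]
        | succ j ih =>
            have e1 : (j + 1) • ((f ^ k) x - x)
                = j • ((f ^ k) x - x) + ((f ^ k) x - x) := succ_nsmul _ j
            rw [e1, A10 _ _ (Wnsmul j _ hdW) hdW, ih, hI _ _ (Wnsmul j _ hdW) hdW, succ_nsmul]
      have hSum0 : (∑ jj ∈ Finset.range p,
          (f (jj • ((f ^ k) x - x)) - jj • ((f ^ k) x - x))) = 0 := by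
        obtain ⟨t, ht⟩ := hodd
        have hsum : (∑ jj ∈ Finset.range p, jj) = t * p := by
          have h2 := Finset.sum_range_id_mul_two p
          have h3 : (∑ jj ∈ Finset.range p, jj) * 2 = (t * p) * 2 := by
            rw [h2]
            conv_lhs => rw [ht]
            have e : 2 * t + 1 - 1 = 2 * t := by omega
            rw [e, ht]
            ring
          exact Nat.eq_of_mul_eq_mul_right (by omega : 0 < 2) h3
        calc (∑ jj ∈ Finset.range p, (f (jj • ((f ^ k) x - x)) - jj • ((f ^ k) x - x)))
            = ∑ jj ∈ Finset.range p, jj • (f ((f ^ k) x - x) - ((f ^ k) x - x)) :=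
              Finset.sum_congr rfl (fun jj _ => Dlin jj)
          _ = (∑ jj ∈ Finset.range p, jj) • (f ((f ^ k) x - x) - ((f ^ k) x - x)) := by
              rw [← Finset.sum_smul]
          _ = 0 := by
              rw [hsum, mul_smul, Vkill _ (hDV _ hdW), smul_zero]
      rw [hSum0, smul_zero, add_zero] at hmain
      obtain ⟨u, hu⟩ := psmul_high E hmain.symm
      exact ⟨u, by linear_combination hu⟩
    · -- Case II : impossible
      exfalso
      push_neg at hI
      obtain ⟨z₀, z₁, hz₀W, hz₁W, hne⟩ := hI
      simp only [nsmul_eq_mul] at hne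
      have hpa₁ : p • (f z₁ - z₁) = 0 := Vkill _ (hDV _ hz₁W)
      have hpmul : (p : ZMod (p ^ (E + 1 + 1))) * (f z₁ - z₁) = 0 := by
        rw [← nsmul_eq_mul]; exact hpa₁
      have hα : ¬ ((p : ℤ) ∣ ((((π z₀ % (N : ℤ)).toNat : ℕ) : ℤ) - 1)) := by
        rintro ⟨t, ht⟩
        apply hne
        have hcast : (((π z₀ % (N : ℤ)).toNat : ℕ) : ZMod (p ^ (E + 1 + 1))) - 1
            = (p : ZMod (p ^ (E + 1 + 1))) * ((t : ℤ) : ZMod (p ^ (E + 1 + 1))) := by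
          have h8 := congrArg (fun z : ℤ => ((z : ℤ) : ZMod (p ^ (E + 1 + 1)))) ht
          push_cast at h8
          exact h8
        have h9 : (((π z₀ % (N : ℤ)).toNat : ℕ) : ZMod (p ^ (E + 1 + 1))) * (f z₁ - z₁)
            - (f z₁ - z₁) = 0 := by
          calc (((π z₀ % (N : ℤ)).toNat : ℕ) : ZMod (p ^ (E + 1 + 1))) * (f z₁ - z₁) - (f z₁ - z₁)
              = ((((π z₀ % (N : ℤ)).toNat : ℕ) : ZMod (p ^ (E + 1 + 1))) - 1) * (f z₁ - z₁) := by
                ring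
            _ = ((t : ℤ) : ZMod (p ^ (E + 1 + 1))) * ((p : ZMod (p ^ (E + 1 + 1))) * (f z₁ - z₁)) := by
                rw [hcast]; ring
            _ = 0 := by rw [hpmul, mul_zero]
        exact sub_eq_zero.mp h9
      -- pivot identity
      have hdag : ∀ z : ZMod (p ^ (E + 1 + 1)),
          (∃ c, z = (p : ZMod (p ^ (E + 1 + 1))) ^ E * c) →
          ((((π z₀ % (N : ℤ)).toNat : ℕ) : ZMod (p ^ (E + 1 + 1))) - 1) * (f z - z)
            = ((((π z % (N : ℤ)).toNat : ℕ) : ZMod (p ^ (E + 1 + 1))) - 1) * (f z₀ - z₀) := by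
        intro z hz
        have h1 := A10 z z₀ hz hz₀W
        have h2 := A10 z₀ z hz₀W hz
        rw [add_comm z₀ z] at h2
        simp only [nsmul_eq_mul] at h1 h2
        linear_combination h1 - h2
      have hz₀ne : f z₀ - z₀ ≠ 0 := by
        intro h0'
        apply hne
        have h10 := hdag z₁ hz₁W
        rw [h0', mul_zero] at h10
        have h11 : (((π z₀ % (N : ℤ)).toNat : ℕ) : ZMod (p ^ (E + 1 + 1))) * (f z₁ - z₁)
            - (f z₁ - z₁) = 0 := by linear_combination h10
        exact sub_eq_zero.mp h11
      have hpz₀ : p • (f z₀ - z₀) = 0 := Vkill _ (hDV _ hz₀W)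
      -- multiplicativity mod p
      have hmult : ∀ z z' : ZMod (p ^ (E + 1 + 1)),
          (∃ c, z = (p : ZMod (p ^ (E + 1 + 1))) ^ E * c) →
          (∃ c, z' = (p : ZMod (p ^ (E + 1 + 1))) ^ E * c) →
          (((π (z + z') % (N : ℤ)).toNat : ZMod p))
            = (((π z % (N : ℤ)).toNat : ZMod p)) * (((π z' % (N : ℤ)).toNat : ZMod p)) := by
        intro z z' hz hz'
        have e1 := hdag (z + z') (Wadd _ _ hz hz')
        have e2 := A10 z z' hz hz'
        have e4 := hdag z hz
        have e5 := hdag z' hz'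
        simp only [nsmul_eq_mul] at e2
        have e3 : ((((π (z + z') % (N : ℤ)).toNat : ℕ) : ZMod (p ^ (E + 1 + 1)))
            - (((π z % (N : ℤ)).toNat : ℕ) : ZMod (p ^ (E + 1 + 1)))
              * (((π z' % (N : ℤ)).toNat : ℕ) : ZMod (p ^ (E + 1 + 1)))) * (f z₀ - z₀) = 0 := by
          linear_combination (-1 : ZMod (p ^ (E + 1 + 1))) * e1
            + ((((π z₀ % (N : ℤ)).toNat : ℕ) : ZMod (p ^ (E + 1 + 1))) - 1) * e2
            + e4 + (((π z % (N : ℤ)).toNat : ℕ) : ZMod (p ^ (E + 1 + 1))) * e5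
        have hdvdX : (p : ℤ) ∣ ((((π (z + z') % (N : ℤ)).toNat : ℕ) : ℤ)
            - (((π z % (N : ℤ)).toNat : ℕ) : ℤ) * (((π z' % (N : ℤ)).toNat : ℕ) : ℤ)) := by
          apply zsmul_prime_dvd hz₀ne hpz₀
          rw [zsmul_eq_mul]
          have hcst : (((((π (z + z') % (N : ℤ)).toNat : ℕ) : ℤ)
              - (((π z % (N : ℤ)).toNat : ℕ) : ℤ) * (((π z' % (N : ℤ)).toNat : ℕ) : ℤ) : ℤ)
                : ZMod (p ^ (E + 1 + 1)))
              = ((((π (z + z') % (N : ℤ)).toNat : ℕ) : ZMod (p ^ (E + 1 + 1)))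
                - (((π z % (N : ℤ)).toNat : ℕ) : ZMod (p ^ (E + 1 + 1)))
                  * (((π z' % (N : ℤ)).toNat : ℕ) : ZMod (p ^ (E + 1 + 1)))) := by
            push_cast
            ring
          rw [hcst]
          exact e3
        have h12 := (ZMod.intCast_zmod_eq_zero_iff_dvd _ p).mpr hdvdX
        push_cast at h12
        exact sub_eq_zero.mp h12
      -- F(0) = 1
      have F0 : (((π (0 : ZMod (p ^ (E + 1 + 1))) % (N : ℤ)).toNat : ZMod p)) = 1 := by
        have h5 := hπ0
        rw [← ZMod.intCast_zmod_eq_zero_iff_dvd] at h5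
        push_cast at h5
        have := sub_eq_zero.mp h5
        exact this
      -- F is nonvanishing on W
      have Funit : ∀ z : ZMod (p ^ (E + 1 + 1)),
          (∃ c, z = (p : ZMod (p ^ (E + 1 + 1))) ^ E * c) →
          (((π z % (N : ℤ)).toNat : ZMod p)) ≠ 0 := by
        rintro z hz
        have hznW : ∃ c, -z = (p : ZMod (p ^ (E + 1 + 1))) ^ E * c := by
          obtain ⟨c, hc⟩ := hz
          exact ⟨-c, by rw [hc]; ring⟩
        have h13 := hmult z (-z) hz hznW
        rw [add_neg_cancel, F0] at h13
        exact left_ne_zero_of_mul_eq_one h13.symm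
      -- F of multiples
      have Fpow : ∀ (t : ℕ) (z : ZMod (p ^ (E + 1 + 1))),
          (∃ c, z = (p : ZMod (p ^ (E + 1 + 1))) ^ E * c) →
          (((π (t • z) % (N : ℤ)).toNat : ZMod p)) = (((π z % (N : ℤ)).toNat : ZMod p)) ^ t := by
        intro t
        induction t with
        | zero => intro z hz; rw [zero_nsmul, pow_zero]; exact F0
        | succ t ih =>
            intro z hz
            rw [succ_nsmul, hmult _ _ (Wnsmul t _ hz) hz, ih z hz, pow_succ]
      -- conclude F(z₀) = 1, contradiction
      have h1 : (((π z₀ % (N : ℤ)).toNat : ZMod p)) ^ (p ^ 2) = 1 := by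
        rw [← Fpow (p ^ 2) z₀ hz₀W, Wkill2 z₀ hz₀W]
        exact F0
      have h2 : (((π z₀ % (N : ℤ)).toNat : ZMod p)) ^ (p - 1) = 1 :=
        ZMod.pow_card_sub_one_eq_one (Funit z₀ hz₀W)
      have hco : Nat.Coprime (p ^ 2) (p - 1) := by
        have h3 : Nat.Coprime p (p - 1) := by
          have h4 := Nat.dvd_sub (Nat.gcd_dvd_left p (p - 1)) (Nat.gcd_dvd_right p (p - 1))
          have h5 : p - (p - 1) = 1 := by
            have := (Fact.out : p.Prime).two_le
            omega
          rw [h5] at h4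
          exact Nat.dvd_one.mp h4
        exact h3.pow_left 2
      have hord1 : orderOf ((((π z₀ % (N : ℤ)).toNat : ZMod p))) = 1 := by
        have d1 := orderOf_dvd_of_pow_eq_one h1
        have d2 := orderOf_dvd_of_pow_eq_one h2
        have d3 := Nat.dvd_gcd d1 d2
        rw [Nat.Coprime] at hco
        rw [hco] at d3
        exact Nat.dvd_one.mp d3
      have hF1 : (((π z₀ % (N : ℤ)).toNat : ZMod p)) = 1 := orderOf_eq_one_iff.mp hord1
      apply hα
      rw [← ZMod.intCast_zmod_eq_zero_iff_dvd]
      push_cast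
      rw [hF1]
      ring


/-! ### the main induction -/

lemma Tzero (E : ℕ) (s : Perm (ZMod (p ^ (E + 1)))) (hord : orderOf s = 1) :
    Nat.gcd ((s 1 - 1 : ZMod (p ^ (E + 1))).val) (p ^ (E + 1)) = p ^ (E + 1) := by
  haveI : NeZero (p ^ (E + 1)) := ⟨pow_ne_zero _ (Fact.out : p.Prime).pos.ne'⟩
  have hs1 : s = 1 := orderOf_eq_one_iff.mp hord
  rw [hs1]
  have : ((1 : Perm (ZMod (p ^ (E + 1)))) 1 - 1 : ZMod (p ^ (E + 1))) = 0 := by simp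
  rw [this, ZMod.val_zero, Nat.gcd_zero_left]

lemma gcd_pow_pow (a b : ℕ) : Nat.gcd (p ^ a) (p ^ b) = p ^ (min a b) := by
  rcases le_total a b with h | h
  · rw [Nat.gcd_eq_left (pow_dvd_pow p h), min_eq_left h]
  · rw [Nat.gcd_eq_right (pow_dvd_pow p h), min_eq_right h]

lemma Tmain (hodd : Odd p) : ∀ E : ℕ, ∀ i : ℕ, i ≤ E → ∀ s : Perm (ZMod (p ^ (E + 1))),
    IsSkewMorphism s → orderOf s = p ^ i →
    Nat.gcd ((s 1 - 1 : ZMod (p ^ (E + 1))).val) (p ^ (E + 1)) = p ^ (E + 1 - i) := by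
  intro E
  induction E with
  | zero =>
      intro i hi s _ hord
      have hi0 : i = 0 := by omega
      subst hi0
      rw [pow_zero] at hord
      simpa using Tzero 0 s hord
  | succ E IH =>
      intro i hi s hs hord
      haveI : NeZero (p ^ (E + 1 + 1)) := ⟨pow_ne_zero _ (Fact.out : p.Prime).pos.ne'⟩
      haveI : NeZero (p ^ (E + 1)) := ⟨pow_ne_zero _ (Fact.out : p.Prime).pos.ne'⟩
      have hp2 := (Fact.out : p.Prime).two_le
      rcases Nat.eq_zero_or_pos i with hi0 | hi1
      · subst hi0
        rw [pow_zero] at hord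
        simpa using Tzero (E + 1) s hord
      -- i ≥ 1
      obtain ⟨hs0, π, hπ⟩ := hs
      have hford : ∃ c, s ^ (p ^ c) = 1 := ⟨i, by rw [← hord]; exact pow_orderOf_eq_one s⟩
      have fixV : ∀ h : ZMod (p ^ (E + 1 + 1)),
          (∃ c, h = (p : ZMod (p ^ (E + 1 + 1))) ^ (E + 1) * c) → s h = h := by
        have hfh := fix_high (p := p) (E + 2) (by omega) ⟨hs0, π, hπ⟩ hford
        intro h hh
        exact hfh h (by simpa using hh)
      have shiftV : ∀ (y h : ZMod (p ^ (E + 1 + 1))),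
          (∃ c, h = (p : ZMod (p ^ (E + 1 + 1))) ^ (E + 1) * c) → s (y + h) = s y + h := by
        intro y h hh
        rw [hπ, zpow_fix (fixV h hh)]
      have hdvd : (p ^ (E + 1)) ∣ (p ^ (E + 1 + 1)) := pow_dvd_pow p (by omega)
      have hkerV : ∀ h : ZMod (p ^ (E + 1 + 1)), cst hdvd h = 0 →
          (∃ c, h = (p : ZMod (p ^ (E + 1 + 1))) ^ (E + 1) * c) := by
        intro h hh
        obtain ⟨c, hc⟩ := cst_ker hdvd hh
        exact ⟨c, by rw [hc]; push_cast; ring⟩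
      have hVker : ∀ h : ZMod (p ^ (E + 1 + 1)),
          (∃ c, h = (p : ZMod (p ^ (E + 1 + 1))) ^ (E + 1) * c) → cst hdvd h = 0 := by
        rintro h ⟨c, rfl⟩
        have e : ((p : ZMod (p ^ (E + 1 + 1))) ^ (E + 1) : ZMod (p ^ (E + 1 + 1)))
            = ((p ^ (E + 1) : ℕ) : ZMod (p ^ (E + 1 + 1))) := by push_cast; ring
        rw [e]
        exact cst_ker' hdvd c
      have hfixcst : ∀ (y h : ZMod (p ^ (E + 1 + 1))), cst hdvd h = 0 → s (y + h) = s y + h :=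
        fun y h hh => shiftV y h (hkerV h hh)
      set sb := desc hdvd s hfixcst with hsb
      have hsbsk : IsSkewMorphism sb := desc_skew hdvd s hfixcst ⟨hs0, π, hπ⟩
      have hppow0 : (p : ZMod (p ^ (E + 1 + 1))) ^ (E + 1 + 1) = 0 := by
        rw [← Nat.cast_pow, ZMod.natCast_self]
      -- the key lemma: s^(p^(i-1)) is trivial mod p^(E+1)
      have hkey := keyC hodd (E + 1) s ⟨hs0, π, hπ⟩ hford (p ^ (i - 1))
        (by have e : p ^ (i - 1) * p = p ^ i := by
              rw [← pow_succ]
              congr 1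
              omega
            rw [e, ← hord]
            exact pow_orderOf_eq_one s)
      have hsb1 : sb ^ (p ^ (i - 1)) = 1 := by
        ext z
        obtain ⟨x, rfl⟩ := cst_surj hdvd z
        rw [hsb, desc_pow hdvd s hfixcst]
        obtain ⟨u, hu⟩ := hkey x
        rw [hu, map_add, hVker _ ⟨u, rfl⟩, add_zero]
        rfl
      -- order of sb is exactly p^(i-1)
      obtain ⟨i', hi'le, hsbord⟩ := (Nat.dvd_prime_pow (Fact.out : p.Prime)).mp
        (orderOf_dvd_of_pow_eq_one hsb1)
      have shift_pow : ∀ (j : ℕ) (y h : ZMod (p ^ (E + 1 + 1))), cst hdvd h = 0 →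
          (s ^ j) (y + h) = (s ^ j) y + h := by
        intro j
        induction j with
        | zero => intro y h _; rfl
        | succ j ihs =>
            intro y h hh
            have e : (s ^ (j + 1)) (y + h) = s ((s ^ j) (y + h)) := by
              rw [pow_succ' s j, Perm.mul_apply]
            have e2 : (s ^ (j + 1)) y = s ((s ^ j) y) := by
              rw [pow_succ' s j, Perm.mul_apply]
            rw [e, e2, ihs y h hh, hfixcst _ _ hh]
      have hii' : i' = i - 1 := by
        by_contra hne'
        have hlt : i' < i - 1 := by omega
        have ht2 : ∀ y, cst hdvd ((s ^ (p ^ i')) y) = cst hdvd y := by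
          intro y
          have e := desc_pow hdvd s hfixcst (p ^ i') y
          rw [← hsb] at e
          rw [← e]
          have e2 : sb ^ (p ^ i') = 1 := by rw [← hsbord]; exact pow_orderOf_eq_one sb
          rw [e2]
          rfl
        have hiter : ∀ (j : ℕ) (y : ZMod (p ^ (E + 1 + 1))),
            ((s ^ (p ^ i')) ^ j) y = y + j • ((s ^ (p ^ i')) y - y) := by
          intro j
          induction j with
          | zero => intro y; simp
          | succ j ihj =>
              intro y
              have e : ((s ^ (p ^ i')) ^ (j + 1)) y = (s ^ (p ^ i')) (((s ^ (p ^ i')) ^ j) y) := by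
                rw [pow_succ' _ j, Perm.mul_apply]
              have hker : cst hdvd (j • ((s ^ (p ^ i')) y - y)) = 0 := by
                rw [map_nsmul, map_sub, ht2 y, sub_self, smul_zero]
              rw [e, ihj y, shift_pow (p ^ i') y _ hker, succ_nsmul]
              abel
        have htp : (s ^ (p ^ i')) ^ p = 1 := by
          ext y
          rw [hiter p y]
          have hker : cst hdvd ((s ^ (p ^ i')) y - y) = 0 := by
            rw [map_sub, ht2 y, sub_self]
          obtain ⟨c, hc⟩ := hkerV _ hker
          rw [hc]
          have e : p • ((p : ZMod (p ^ (E + 1 + 1))) ^ (E + 1) * c) = 0 := by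
            rw [nsmul_eq_mul]
            calc (p : ZMod (p ^ (E + 1 + 1))) * ((p : ZMod (p ^ (E + 1 + 1))) ^ (E + 1) * c)
                = (p : ZMod (p ^ (E + 1 + 1))) ^ (E + 1 + 1) * c := by ring
              _ = 0 := by rw [hppow0, zero_mul]
          rw [e, add_zero]
          rfl
        have hs1 : s ^ (p ^ (i' + 1)) = 1 := by
          have e : p ^ (i' + 1) = p ^ i' * p := pow_succ p i'
          rw [e, pow_mul]
          exact htp
        have hdvd' : p ^ i ∣ p ^ (i' + 1) := by
          rw [← hord]
          exact orderOf_dvd_of_pow_eq_one hs1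
        have := (Nat.pow_dvd_pow_iff_le_right (by omega : 1 < p)).mp hdvd'
        omega
      -- apply the inner induction hypothesis
      have hIH := IH (i - 1) (by omega) sb hsbsk (by rw [hsbord, hii'])
      -- relate s 1 - 1 and sb 1 - 1
      have hcomm1 : cst hdvd (s 1 - 1) = sb 1 - 1 := by
        rw [map_sub, map_one (cst hdvd)]
        have e : cst hdvd (s 1) = sb 1 := by
          have e0 := (desc_comm hdvd s hfixcst 1).symm
          have e1 : cst hdvd (1 : ZMod (p ^ (E + 1 + 1))) = 1 := map_one _
          rw [e1] at e0
          rw [e0, hsb]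
        rw [e]
      have hval : (sb 1 - 1).val = (s 1 - 1 : ZMod (p ^ (E + 1 + 1))).val % (p ^ (E + 1)) := by
        rw [← hcomm1]
        have e : cst hdvd (s 1 - 1) = (((s 1 - 1 : ZMod (p ^ (E + 1 + 1))).val : ℕ) : ZMod (p ^ (E + 1))) := by
          conv_lhs => rw [← ZMod.natCast_rightInverse (s 1 - 1 : ZMod (p ^ (E + 1 + 1)))]
          rw [cst_natCast]
        rw [e, ZMod.val_natCast]
      have hg : Nat.gcd ((s 1 - 1 : ZMod (p ^ (E + 1 + 1))).val) (p ^ (E + 1)) = p ^ (E + 1 - (i - 1)) := by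
        rw [Nat.gcd_comm, Nat.gcd_rec, ← hval]
        exact hIH
      have hEi : E + 1 - (i - 1) = E + 2 - i := by omega
      rw [hEi] at hg
      -- now lift the gcd computation one level
      obtain ⟨j, hjle, hj⟩ := (Nat.dvd_prime_pow (Fact.out : p.Prime)).mp
        (Nat.gcd_dvd_right ((s 1 - 1 : ZMod (p ^ (E + 1 + 1))).val) (p ^ (E + 1 + 1)))
      have hglue : Nat.gcd ((s 1 - 1 : ZMod (p ^ (E + 1 + 1))).val) (p ^ (E + 1))
          = Nat.gcd (Nat.gcd ((s 1 - 1 : ZMod (p ^ (E + 1 + 1))).val) (p ^ (E + 1 + 1))) (p ^ (E + 1)) := by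
        conv_lhs => rw [show (p ^ (E + 1)) = Nat.gcd (p ^ (E + 1 + 1)) (p ^ (E + 1)) from
          (Nat.gcd_eq_right (pow_dvd_pow p (by omega))).symm]
        rw [Nat.gcd_assoc]
      rw [hglue, hj, gcd_pow_pow] at hg
      rcases Nat.lt_or_ge i 2 with hi2 | hi2
      · -- i = 1
        have hieq : i = 1 := by omega
        subst hieq
        have hb0 : (s 1 - 1 : ZMod (p ^ (E + 1 + 1))) ≠ 0 := by
          intro hb
          have hs1' : s 1 = 1 := by
            have := sub_eq_zero.mp hb
            exact this
          have := skew_fix_one ⟨hs0, π, hπ⟩ hs1'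
          rw [this] at hord
          simp only [orderOf_one, pow_one] at hord
          omega
        have hbval : (s 1 - 1 : ZMod (p ^ (E + 1 + 1))).val ≠ 0 :=
          fun h => hb0 ((ZMod.val_eq_zero _).mp h)
        have hblt : (s 1 - 1 : ZMod (p ^ (E + 1 + 1))).val < p ^ (E + 1 + 1) := ZMod.val_lt _
        -- min j (E+1) = E+1, so j ≥ E+1
        have hjge : E + 1 ≤ j := by
          by_contra hjlt
          push_neg at hjlt
          have : min j (E + 1) = j := by omega
          rw [this] at hg
          have := Nat.pow_right_injective hp2 hg
          omega
        have hjne : j ≠ E + 1 + 1 := by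
          intro hj2
          have hdvdb : p ^ (E + 1 + 1) ∣ (s 1 - 1 : ZMod (p ^ (E + 1 + 1))).val := by
            have h6 : p ^ j ∣ (s 1 - 1 : ZMod (p ^ (E + 1 + 1))).val := by
              rw [← hj]
              exact Nat.gcd_dvd_left _ _
            rw [hj2] at h6
            exact h6
          have := Nat.le_of_dvd (Nat.pos_of_ne_zero hbval) hdvdb
          omega
        have hjeq : j = E + 1 := by omega
        rw [hj, hjeq]
        congr 1
      · -- i ≥ 2
        have hmin : min j (E + 1) = E + 2 - i := Nat.pow_right_injective hp2 hg
        have hjeq : j = E + 2 - i := by omega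
        rw [hj, hjeq]

end SkewProof

/-- If `s` is a skew-morphism of `ℤ/p^eℤ` of order `p^i` (`0 ≤ i ≤ e-1`),
then `gcd(s(1) - 1, p^e) = p^(e-i)`, where `s(1) - 1` is represented by its
value in `{0, …, p^e - 1}`. -/
theorem stmt_11 (p e i : ℕ) (hp : p.Prime) (hodd : Odd p) (he : 1 ≤ e)
    (hi : i ≤ e - 1) (s : Equiv.Perm (ZMod (p ^ e)))
    (hs : IsSkewMorphism s) (hord : orderOf s = p ^ i) :
    Nat.gcd (s 1 - 1 : ZMod (p ^ e)).val (p ^ e) = p ^ (e - i) := by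
  haveI : Fact p.Prime := ⟨hp⟩
  obtain ⟨E, rfl⟩ : ∃ E, e = E + 1 := ⟨e - 1, by omega⟩
  have hi' : i ≤ E := by omega
  have h := SkewProof.Tmain hodd E i hi' s hs hord
  simpa using h
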